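/- For the cyclic group ℤ_n of order n and every r ∈ ℕ, the limit as n → ∞ of ms(ℤ_n, r) exists and equals 1/r², where ms(G, r)·|G| is the largest k such that every r-coloring of G contains a monochromatic symmetric subset of size ≥ k. -/

import Mathlib

open Filter

/-- MS(ℤ_n, r): the largest k such that every r-coloring of ℤ_n contains a
monochromatic symmetric subset of size ≥ k. -/
noncomputable def MScyc (n r : ℕ) : ℕ :=
  sSup {k : ℕ | ∀ χ : ZMod n → Fin r, ∃ A : Set (ZMod n),
    (∃ c, ∀ a ∈ A, χ a = c) ∧ (∃ x : ZMod n, A = (fun a => 2 • x - a) '' A) ∧ k ≤ A.ncard}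

set_option linter.unusedSectionVars false

namespace MS11

open Finset

variable (n r : ℕ)

section core
variable [NeZero n]

def pairSet (χ : ZMod n → Fin r) (t : ZMod n) (c : Fin r) : Finset (ZMod n) :=
  Finset.univ.filter (fun a => χ a = c ∧ χ (t - a) = c)

def Ycnt (χ : ZMod n → Fin r) (t : ZMod n) (c : Fin r) : ℕ := (pairSet n r χ t c).card

def Rset (t : ZMod n) : Finset (ZMod n) :=
  Finset.univ.filter (fun a => a.val < (t - a).val)

def Wcnt (χ : ZMod n → Fin r) (t : ZMod n) (c : Fin r) : ℕ :=
  ((Rset n t).filter (fun a => χ a = c ∧ χ (t - a) = c)).card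

lemma sub_sub_self' (t a : ZMod n) : t - (t - a) = a := by ring

lemma refl_injOn (t : ZMod n) (s : Set (ZMod n)) : Set.InjOn (fun a => t - a) s := by
  intro a _ b _ h
  simp only at h
  have : t - (t - a) = t - (t - b) := by rw [h]
  rwa [sub_sub_self', sub_sub_self'] at this

lemma mem_Rset_not (t : ZMod n) {a : ZMod n} (h : a ∈ Rset n t) : t - a ∉ Rset n t := by
  simp only [Rset, mem_filter, mem_univ, true_and] at *
  rw [sub_sub_self']
  omega

lemma Rset_card (t : ZMod n) : 2 * (Rset n t).card ≤ n := by
  have hdisj : Disjoint (Rset n t) ((Rset n t).image (fun a => t - a)) := by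
    rw [Finset.disjoint_right]
    intro b hb hbR
    simp only [mem_image] at hb
    obtain ⟨a, ha, rfl⟩ := hb
    exact mem_Rset_not n t ha hbR
  have hcard : ((Rset n t) ∪ (Rset n t).image (fun a => t - a)).card ≤ Fintype.card (ZMod n) :=
    Finset.card_le_card (Finset.subset_univ _) |>.trans (by simp [Finset.card_univ])
  rw [Finset.card_union_of_disjoint hdisj,
    Finset.card_image_of_injOn (refl_injOn n t _)] at hcard
  rw [ZMod.card] at hcard
  omega

lemma Rset_tri (t a : ZMod n) : a ∈ Rset n t ∨ t - a ∈ Rset n t ∨ a + a = t := by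
  simp only [Rset, mem_filter, mem_univ, true_and, sub_sub_self']
  rcases lt_trichotomy a.val (t - a).val with h | h | h
  · exact Or.inl h
  · refine Or.inr (Or.inr ?_)
    have h2 : t - a = a := ZMod.val_injective n h.symm
    rw [sub_eq_iff_eq_add] at h2
    exact h2.symm
  · exact Or.inr (Or.inl h)

lemma two_torsion_card (t : ZMod n) :
    (Finset.univ.filter (fun a : ZMod n => a + a = t)).card ≤ 2 := by
  set S := Finset.univ.filter (fun a : ZMod n => a + a = t) with hS
  rcases S.eq_empty_or_nonempty with h | ⟨a₀, ha₀⟩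
  · simp [h]
  · have ha₀' : a₀ + a₀ = t := by
      simpa [hS] using ha₀
    have hsub : S ⊆ {a₀, a₀ + ((n / 2 : ℕ) : ZMod n)} := by
      intro a ha
      have ha' : a + a = t := by simpa [hS] using ha
      have hz : (a - a₀) + (a - a₀) = 0 := by
        have h0 : (a + a) - (a₀ + a₀) = 0 := by rw [ha', ha₀']; ring
        linear_combination h0
      set z := a - a₀ with hzdef
      have hval : ((z.val + z.val : ℕ) : ZMod n) = 0 := by
        push_cast
        rw [ZMod.natCast_val, ZMod.cast_id]
        exact hz
      rw [ZMod.natCast_eq_zero_iff] at hval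
      have hvlt : z.val < n := ZMod.val_lt z
      obtain ⟨k, hk⟩ := hval
      have hk2 : k < 2 := by
        by_contra hcon
        push_neg at hcon
        have : n * 2 ≤ n * k := Nat.mul_le_mul_left n hcon
        omega
      interval_cases k
      · -- z.val = 0
        have hz0 : z = 0 := by
          rw [← ZMod.val_eq_zero]; omega
        have : a = a₀ := by
          have := sub_eq_zero.mp (hzdef ▸ hz0)
          exact this
        simp [this]
      · -- z.val = n/2
        have hzv : z.val = n / 2 := by omega
        have hzz : z = ((n / 2 : ℕ) : ZMod n) := by
          have hv : ((z.val : ℕ) : ZMod n) = z := by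
            rw [ZMod.natCast_val, ZMod.cast_id]
          rw [← hv, hzv]
        have : a = a₀ + ((n / 2 : ℕ) : ZMod n) := by
          rw [← hzz, hzdef]; ring
        simp [this]
    calc S.card ≤ _ := Finset.card_le_card hsub
      _ ≤ 2 := (Finset.card_insert_le _ _).trans (by simp)

lemma Ycnt_le (χ : ZMod n → Fin r) (t : ZMod n) (c : Fin r) :
    Ycnt n r χ t c ≤ 2 * Wcnt n r χ t c + 2 := by
  classical
  set P : ZMod n → Prop := fun a => χ a = c ∧ χ (t - a) = c with hP
  have hsub : pairSet n r χ t c ⊆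
      ((Rset n t).filter P ∪ ((Rset n t).filter P).image (fun a => t - a)) ∪
        Finset.univ.filter (fun a : ZMod n => a + a = t) := by
    intro a ha
    simp only [pairSet, mem_filter, mem_univ, true_and] at ha
    rcases Rset_tri n t a with h | h | h
    · exact Finset.mem_union_left _ (Finset.mem_union_left _ (by simp [mem_filter, h, hP, ha]))
    · refine Finset.mem_union_left _ (Finset.mem_union_right _ ?_)
      simp only [mem_image, mem_filter]
      exact ⟨t - a, ⟨h, ha.2, by rw [sub_sub_self']; exact ha.1⟩, sub_sub_self' n t a⟩
    · exact Finset.mem_union_right _ (by simp [h])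
  calc Ycnt n r χ t c ≤ _ := Finset.card_le_card hsub
    _ ≤ (((Rset n t).filter P).card + (((Rset n t).filter P).image (fun a => t - a)).card)
        + (Finset.univ.filter (fun a : ZMod n => a + a = t)).card := by
        refine (Finset.card_union_le _ _).trans ?_
        exact Nat.add_le_add_right (Finset.card_union_le _ _) _
    _ ≤ 2 * Wcnt n r χ t c + 2 := by
        have h1 := Finset.card_image_le (s := (Rset n t).filter P) (f := fun a => t - a)
        have h2 := two_torsion_card n t
        have h3 : Wcnt n r χ t c = ((Rset n t).filter P).card := rfl
        omega

lemma sum_ite_eq_c (c : Fin r) (x y : ℝ) :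
    ∑ v : Fin r, (if v = c then x else y) = x + ((r : ℝ) - 1) * y := by
  classical
  have hr1 : 0 < r := c.pos
  rw [Finset.sum_ite, Finset.sum_const, Finset.sum_const]
  have h1 : (Finset.univ.filter (fun v : Fin r => v = c)).card = 1 := by
    rw [Finset.filter_eq']
    simp
  have h2 : (Finset.univ.filter (fun v : Fin r => ¬ v = c)).card = r - 1 := by
    have h3 := Finset.card_filter_add_card_filter_not
      (s := (Finset.univ : Finset (Fin r))) (p := fun v : Fin r => v = c)
    rw [Finset.card_univ, Fintype.card_fin] at h3
    omega
  rw [h1, h2, one_smul, nsmul_eq_mul, Nat.cast_sub (by omega : 1 ≤ r)]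
  push_cast
  ring

lemma card_filter_subtype {α : Type*} [DecidableEq α] (R : Finset α) (p : α → Prop)
    [DecidablePred p] :
    (Finset.univ.filter (fun a : {x // x ∈ R} => p a.1)).card = (R.filter p).card := by
  rw [Finset.univ_eq_attach, Finset.filter_attach, Finset.card_map, Finset.card_attach]

lemma sum_fun_prod {ι κ : Type*} [Fintype ι] [DecidableEq ι] [Fintype κ] [DecidableEq κ]
    (G : ι → κ → ℝ) :
    ∑ f : ι → κ, ∏ i, G i (f i) = ∏ i, ∑ v, G i v := by
  rw [Finset.prod_univ_sum]
  rw [Fintype.piFinset_univ]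

lemma sum_pow_W (hr1 : 0 < r) (t : ZMod n) (c : Fin r) (x : ℝ) :
    ∑ χ : ZMod n → Fin r, x ^ (Wcnt n r χ t c)
      = ((r : ℝ) ^ 2 - 1 + x) ^ (Rset n t).card * (r : ℝ) ^ (n - 2 * (Rset n t).card) := by
  classical
  set R := Rset n t with hR
  set m := R.card with hm
  let Rs := {a : ZMod n // a ∈ R}
  let Qs := {a : ZMod n // a ∉ R}
  let σ' : Rs → Qs := fun a => ⟨t - a.1, mem_Rset_not n t a.2⟩
  have hσinj : Function.Injective σ' := by
    intro a b h
    have h1 : t - a.1 = t - b.1 := congrArg Subtype.val h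
    have := refl_injOn n t Set.univ (Set.mem_univ a.1) (Set.mem_univ b.1) h1
    exact Subtype.ext this
  let combine : ((Rs → Fin r) × (Qs → Fin r)) → (ZMod n → Fin r) :=
    fun z a => if h : a ∈ R then z.1 ⟨a, h⟩ else z.2 ⟨a, h⟩
  have hcombine1 : ∀ z (a : Rs), combine z a.1 = z.1 a := by
    intro z a
    simp only [combine, a.2, dif_pos]
    rfl
  have hcombine2 : ∀ z (a : Qs), combine z a.1 = z.2 a := by
    intro z a
    simp only [combine, a.2, dif_neg, not_false_iff]
    rfl
  have hbij : Function.Bijective combine := by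
    constructor
    · intro z w h
      have h1 : z.1 = w.1 := funext fun a => by
        have := congrFun h a.1; rwa [hcombine1, hcombine1] at this
      have h2 : z.2 = w.2 := funext fun a => by
        have := congrFun h a.1; rwa [hcombine2, hcombine2] at this
      cases z; cases w
      simp_all
    · intro χ
      refine ⟨(fun a => χ a.1, fun a => χ a.1), ?_⟩
      funext a
      simp only [combine]
      split <;> rfl
  have hW : ∀ z, Wcnt n r (combine z) t c
      = (Finset.univ.filter (fun a : Rs => z.1 a = c ∧ z.2 (σ' a) = c)).card := by
    intro z
    unfold Wcnt
    rw [← card_filter_subtype R (fun a => combine z a = c ∧ combine z (t - a) = c)]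
    congr 1
    apply Finset.filter_congr
    intro a _
    have e1 : combine z a.1 = z.1 a := hcombine1 z a
    have e2 : combine z (t - a.1) = z.2 (σ' a) := hcombine2 z (σ' a)
    rw [e1, e2]
  have key : ∑ χ : ZMod n → Fin r, x ^ (Wcnt n r χ t c)
      = ∑ z : (Rs → Fin r) × (Qs → Fin r), x ^ (Wcnt n r (combine z) t c) :=
    (Fintype.sum_bijective combine hbij _ _ (fun z => rfl)).symm
  rw [key]
  have step2 : ∀ z : (Rs → Fin r) × (Qs → Fin r), x ^ (Wcnt n r (combine z) t c)
      = ∏ a : Rs, (if (z.1 a = c ∧ z.2 (σ' a) = c) then x else 1) := by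
    intro z
    rw [hW, Finset.prod_ite, Finset.prod_const, Finset.prod_const, one_pow, mul_one]
  simp only [step2]
  rw [Fintype.sum_prod_type]
  rw [Finset.sum_comm]
  have step5 : ∀ g : Qs → Fin r,
      (∑ f : Rs → Fin r, ∏ a : Rs, (if (f a = c ∧ g (σ' a) = c) then x else 1))
      = ∏ a : Rs, (if g (σ' a) = c then x + ((r:ℝ) - 1) else r) := by
    intro g
    rw [sum_fun_prod (G := fun (a : Rs) (v : Fin r) =>
      if v = c ∧ g (σ' a) = c then x else 1)]
    congr 1
    funext a
    by_cases hgc : g (σ' a) = c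
    · simp only [hgc, and_true, if_true]
      rw [sum_ite_eq_c r c x 1]
      ring
    · simp only [hgc, and_false, if_false]
      rw [Finset.sum_const, Finset.card_univ, Fintype.card_fin, nsmul_eq_mul, mul_one]
  simp only [step5]
  -- now reindex over image of σ'
  set Φ : Fin r → ℝ := fun w => if w = c then x + ((r:ℝ) - 1) else r with hΦ
  have step6 : ∀ g : Qs → Fin r, (∏ a : Rs, Φ (g (σ' a)))
      = ∏ b : Qs, (if b ∈ Finset.univ.image σ' then Φ (g b) else 1) := by
    intro g
    have h1 : ∏ b ∈ Finset.univ.image σ', Φ (g b) = ∏ a : Rs, Φ (g (σ' a)) := by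
      rw [Finset.prod_image]
      intro a _ b _ h
      exact hσinj h
    rw [← h1, Fintype.prod_ite_mem]
  change (∑ g : Qs → Fin r, ∏ a : Rs, Φ (g (σ' a))) = _
  simp only [step6]
  have step7 : (∑ g : Qs → Fin r, ∏ b : Qs, (if b ∈ Finset.univ.image σ' then Φ (g b) else 1))
      = ∏ b : Qs, (if b ∈ Finset.univ.image σ' then ((r:ℝ)^2 - 1 + x) else (r:ℝ)) := by
    rw [sum_fun_prod (G := fun (b : Qs) (v : Fin r) =>
      if b ∈ Finset.univ.image σ' then Φ v else 1)]
    congr 1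
    funext b
    by_cases hb : b ∈ Finset.univ.image σ'
    · simp only [hb, if_true]
      rw [hΦ]
      rw [sum_ite_eq_c r c (x + ((r:ℝ)-1)) r]
      ring
    · simp only [hb, if_false]
      rw [Finset.sum_const, Finset.card_univ, Fintype.card_fin, nsmul_eq_mul, mul_one]
  rw [step7]
  rw [Finset.prod_ite, Finset.prod_const, Finset.prod_const]
  have himgcard : (Finset.univ.filter (fun b : Qs => b ∈ Finset.univ.image σ')).card = m := by
    rw [Finset.filter_univ_mem, Finset.card_image_of_injective _ hσinj, Finset.card_univ]
    rw [Fintype.card_coe]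
  have hQcard : (Finset.univ : Finset Qs).card = n - m := by
    rw [Finset.card_univ]
    have : Fintype.card Qs = Fintype.card (ZMod n) - Fintype.card Rs :=
      Fintype.card_subtype_compl _
    rw [this, ZMod.card, Fintype.card_coe]
  have hfilterneg : (Finset.univ.filter (fun b : Qs => ¬ b ∈ Finset.univ.image σ')).card
      = (n - m) - m := by
    have := Finset.card_filter_add_card_filter_not
      (s := (Finset.univ : Finset Qs)) (p := fun b : Qs => b ∈ Finset.univ.image σ')
    omega
  rw [himgcard, hfilterneg]
  have hee : (n - m) - m = n - 2 * m := by omega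
  rw [hee]

lemma aux_sq (A R : ℝ) (hR : 0 < R) (m k : ℕ) :
    (A ^ m * R ^ k) ^ 2 = ((A / R ^ 2) ^ (2 * m)) * R ^ (2 * (2 * m + k)) := by
  rw [div_pow, div_mul_eq_mul_div, eq_div_iff (by positivity)]
  ring

lemma bad_card (hr1 : 0 < r) (t : ZMod n) (c : Fin r) (x : ℝ) (hx : 1 ≤ x) (K : ℕ) :
    ((Finset.univ.filter (fun χ : ZMod n → Fin r => K ≤ Ycnt n r χ t c)).card : ℝ)
      * x ^ ((K - 1) / 2)
    ≤ ((r:ℝ)^2 - 1 + x) ^ (Rset n t).card * (r:ℝ) ^ (n - 2 * (Rset n t).card) := by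
  classical
  have hx0 : (0:ℝ) ≤ x := le_trans zero_le_one hx
  rw [← sum_pow_W n r hr1 t c x]
  set bad := Finset.univ.filter (fun χ : ZMod n → Fin r => K ≤ Ycnt n r χ t c) with hbad
  calc (bad.card : ℝ) * x ^ ((K - 1) / 2) = ∑ _χ ∈ bad, x ^ ((K - 1) / 2) := by
        rw [Finset.sum_const, nsmul_eq_mul]
    _ ≤ ∑ χ ∈ bad, x ^ (Wcnt n r χ t c) := by
        apply Finset.sum_le_sum
        intro χ hχ
        have hY : K ≤ Ycnt n r χ t c := by
          simp only [hbad, mem_filter] at hχ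
          exact hχ.2
        have hWY := Ycnt_le n r χ t c
        exact pow_le_pow_right₀ hx (by omega)
    _ ≤ ∑ χ : ZMod n → Fin r, x ^ (Wcnt n r χ t c) := by
        apply Finset.sum_le_sum_of_subset_of_nonneg (Finset.subset_univ _)
        intro χ _ _
        exact pow_nonneg hx0 _

lemma good_exists (hr1 : 0 < r) (hn0 : 0 < n) (x : ℝ) (hx : 1 ≤ x) (K : ℕ)
    (Hnum : ((n:ℝ) * r)^2 * ((((r:ℝ)^2 - 1 + x) / (r:ℝ)^2))^n < x ^ (2 * ((K - 1) / 2))) :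
    ∃ χ : ZMod n → Fin r, ∀ (t : ZMod n) (c : Fin r), Ycnt n r χ t c < K := by
  classical
  have hx0 : (0:ℝ) < x := lt_of_lt_of_le zero_lt_one hx
  have hrR : (0:ℝ) < (r:ℝ) := by exact_mod_cast hr1
  by_contra hcon
  push_neg at hcon
  -- every coloring is bad for some (t, c)
  have hcover : (Finset.univ : Finset (ZMod n → Fin r)) ⊆
      (Finset.univ : Finset (ZMod n × Fin r)).biUnion
        (fun tc => Finset.univ.filter (fun χ => K ≤ Ycnt n r χ tc.1 tc.2)) := by
    intro χ _
    obtain ⟨t, c, h⟩ := hcon χ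
    exact Finset.mem_biUnion.mpr ⟨(t, c), Finset.mem_univ _, by simp [h]⟩
  have hcards : (r:ℝ)^n ≤ ∑ tc : ZMod n × Fin r,
      ((Finset.univ.filter (fun χ : ZMod n → Fin r => K ≤ Ycnt n r χ tc.1 tc.2)).card : ℝ) := by
    have h1 : (Finset.univ : Finset (ZMod n → Fin r)).card ≤ ∑ tc : ZMod n × Fin r,
        (Finset.univ.filter (fun χ : ZMod n → Fin r => K ≤ Ycnt n r χ tc.1 tc.2)).card :=
      le_trans (Finset.card_le_card hcover) (Finset.card_biUnion_le)
    have h2 : (Finset.univ : Finset (ZMod n → Fin r)).card = r ^ n := by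
      rw [Finset.card_univ, Fintype.card_fun, Fintype.card_fin, ZMod.card]
    rw [h2] at h1
    calc (r:ℝ)^n = ((r^n : ℕ) : ℝ) := by push_cast; ring
      _ ≤ _ := by exact_mod_cast h1
  -- individual bound
  have hone : ∀ tc : ZMod n × Fin r,
      ((Finset.univ.filter (fun χ : ZMod n → Fin r => K ≤ Ycnt n r χ tc.1 tc.2)).card : ℝ)
        * ((n:ℝ) * r) < (r:ℝ)^n := by
    intro tc
    set B := ((Finset.univ.filter
      (fun χ : ZMod n → Fin r => K ≤ Ycnt n r χ tc.1 tc.2)).card : ℝ) with hB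
    set m := (Rset n tc.1).card with hm
    have h2m : 2 * m ≤ n := Rset_card n tc.1
    have hstep := bad_card n r hr1 tc.1 tc.2 x hx K
    rw [← hB, ← hm] at hstep
    have hB0 : 0 ≤ B := by positivity
    have hbase : (1:ℝ) ≤ ((r:ℝ)^2 - 1 + x) / (r:ℝ)^2 := by
      rw [le_div_iff₀ (by positivity)]
      nlinarith
    have hRHSsq : (((r:ℝ)^2 - 1 + x) ^ m * (r:ℝ) ^ (n - 2*m))^2
        = ((((r:ℝ)^2 - 1 + x) / (r:ℝ)^2))^(2*m) * (r:ℝ)^(2*n) := by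
      have haux := aux_sq ((r:ℝ)^2 - 1 + x) (r:ℝ) hrR m (n - 2*m)
      rw [show 2*(2*m + (n - 2*m)) = 2*n by omega] at haux
      exact haux
    have hmono : ((((r:ℝ)^2 - 1 + x) / (r:ℝ)^2))^(2*m)
        ≤ ((((r:ℝ)^2 - 1 + x) / (r:ℝ)^2))^n :=
      pow_le_pow_right₀ hbase (by omega)
    -- squared comparison
    have hsq : (B * ((n:ℝ)*r))^2 * x ^ (2 * ((K - 1) / 2))
        < ((r:ℝ)^n)^2 * x ^ (2 * ((K - 1) / 2)) := by
      have e1 : (B * ((n:ℝ)*r))^2 * x ^ (2 * ((K - 1) / 2))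
          = (B * x ^ ((K-1)/2))^2 * ((n:ℝ)*r)^2 := by
        rw [two_mul, pow_add]
        ring
      rw [e1]
      have e2 : (B * x ^ ((K-1)/2))^2 ≤ (((r:ℝ)^2 - 1 + x) ^ m * (r:ℝ) ^ (n - 2*m))^2 := by
        apply pow_le_pow_left₀ (by positivity) hstep
      calc (B * x ^ ((K-1)/2))^2 * ((n:ℝ)*r)^2
          ≤ (((r:ℝ)^2 - 1 + x) ^ m * (r:ℝ) ^ (n - 2*m))^2 * ((n:ℝ)*r)^2 := by
            apply mul_le_mul_of_nonneg_right e2 (by positivity)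
        _ = ((n:ℝ)*r)^2 * (((((r:ℝ)^2 - 1 + x) / (r:ℝ)^2))^(2*m)) * (r:ℝ)^(2*n) := by
            rw [hRHSsq]; ring
        _ ≤ ((n:ℝ)*r)^2 * (((((r:ℝ)^2 - 1 + x) / (r:ℝ)^2))^n) * (r:ℝ)^(2*n) := by
            apply mul_le_mul_of_nonneg_right _ (by positivity)
            apply mul_le_mul_of_nonneg_left hmono (by positivity)
        _ < x ^ (2 * ((K - 1) / 2)) * (r:ℝ)^(2*n) := by
            apply mul_lt_mul_of_pos_right _ (by positivity)
            exact Hnum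
        _ = ((r:ℝ)^n)^2 * x ^ (2 * ((K - 1) / 2)) := by
            rw [← pow_mul]
            ring_nf
    have hsq2 : (B * ((n:ℝ)*r))^2 < ((r:ℝ)^n)^2 :=
      lt_of_mul_lt_mul_right hsq (by positivity)
    exact lt_of_pow_lt_pow_left₀ 2 (by positivity) hsq2
  -- sum up
  have hfinal : ∑ tc : ZMod n × Fin r,
      ((Finset.univ.filter (fun χ : ZMod n → Fin r => K ≤ Ycnt n r χ tc.1 tc.2)).card : ℝ)
      < (r:ℝ)^n := by
    have hcardtc : (Fintype.card (ZMod n × Fin r) : ℝ) = (n:ℝ) * r := by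
      rw [Fintype.card_prod, ZMod.card, Fintype.card_fin]
      push_cast; ring
    have hpos : (0:ℝ) < (n:ℝ) * r := by positivity
    have := Finset.sum_lt_sum_of_nonempty (s := (Finset.univ : Finset (ZMod n × Fin r)))
      (f := fun tc => ((Finset.univ.filter
        (fun χ : ZMod n → Fin r => K ≤ Ycnt n r χ tc.1 tc.2)).card : ℝ))
      (g := fun _ => (r:ℝ)^n / ((n:ℝ)*r)) ?_ ?_
    · rw [Finset.sum_const, nsmul_eq_mul, Finset.card_univ, hcardtc] at this
      rw [mul_div_cancel₀ _ (ne_of_gt hpos)] at this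
      exact this
    · haveI : Nonempty (Fin r) := ⟨⟨0, hr1⟩⟩
      exact Finset.univ_nonempty
    · intro tc _
      rw [lt_div_iff₀ hpos]
      exact hone tc
  exact absurd (lt_of_le_of_lt hcards hfinal) (lt_irrefl _)

def cnt (t : ZMod n) [NeZero n] : ℕ := (Finset.univ.filter (fun x : ZMod n => x + x = t)).card

def colorClass (χ : ZMod n → Fin r) (c : Fin r) [NeZero n] : Finset (ZMod n) :=
  Finset.univ.filter (fun a => χ a = c)

lemma Ysum_eq (χ : ZMod n → Fin r) (c : Fin r) :
    ∑ x : ZMod n, Ycnt n r χ (x + x) c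
      = ∑ a ∈ colorClass n r χ c, ∑ b ∈ colorClass n r χ c, cnt n (a + b) := by
  classical
  have h1 : ∀ x : ZMod n, Ycnt n r χ (x + x) c
      = ∑ a : ZMod n, (if (χ a = c ∧ χ (x + x - a) = c) then 1 else 0) := by
    intro x
    rw [Ycnt, pairSet, Finset.card_filter]
  simp only [h1]
  rw [Finset.sum_comm]
  rw [← Finset.sum_filter_add_sum_filter_not Finset.univ (fun a => χ a = c)]
  have hzero : ∑ a ∈ Finset.univ.filter (fun a => ¬ χ a = c),
      (∑ x : ZMod n, if (χ a = c ∧ χ (x + x - a) = c) then 1 else 0) = 0 := by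
    apply Finset.sum_eq_zero
    intro a ha
    simp only [mem_filter] at ha
    apply Finset.sum_eq_zero
    intro x _
    simp [ha.2]
  rw [hzero, add_zero]
  apply Finset.sum_congr rfl
  intro a ha
  simp only [colorClass, mem_filter] at ha
  have hsimp : ∀ x : ZMod n, (if (χ a = c ∧ χ (x + x - a) = c) then 1 else 0)
      = (if (χ (x + x - a) = c) then 1 else 0) := by
    intro x
    simp [ha.2]
  simp only [hsimp]
  have h2 : ∀ x : ZMod n, (if (χ (x + x - a) = c) then 1 else 0)
      = ∑ b ∈ colorClass n r χ c, (if (b = x + x - a) then 1 else 0) := by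
    intro x
    rw [Finset.sum_ite_eq' (colorClass n r χ c) (x + x - a) (fun _ => (1:ℕ))]
    by_cases hx : χ (x + x - a) = c
    · simp [colorClass, hx]
    · simp [colorClass, hx]
  simp only [h2]
  rw [Finset.sum_comm]
  apply Finset.sum_congr rfl
  intro b hb
  rw [cnt, Finset.card_filter]
  apply Finset.sum_congr rfl
  intro x _
  have hiff : (b = x + x - a) ↔ (x + x = a + b) := by
    constructor
    · intro h
      rw [h]; ring
    · intro h
      rw [h]; ring
  simp [hiff]

lemma cnt_ge_odd (hodd : n % 2 = 1) (s : ZMod n) : 1 ≤ cnt n s := by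
  have hx : (((n+1)/2 : ℕ) : ZMod n) * s + (((n+1)/2 : ℕ) : ZMod n) * s = s := by
    rw [← add_mul, ← Nat.cast_add, show (n+1)/2 + (n+1)/2 = n + 1 by omega]
    push_cast
    rw [ZMod.natCast_self]
    ring
  rw [cnt]
  apply Finset.card_pos.mpr
  exact ⟨_, Finset.mem_filter.mpr ⟨Finset.mem_univ _, hx⟩⟩

lemma cnt_ge_even (heven : n % 2 = 0) (s : ZMod n) (hs : s.val % 2 = 0) : 2 ≤ cnt n s := by
  have hn : n ≠ 0 := NeZero.ne n
  have hn2 : 2 ≤ n := by omega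
  have hvs : ((s.val : ℕ) : ZMod n) = s := by rw [ZMod.natCast_val, ZMod.cast_id]
  set x₁ : ZMod n := ((s.val / 2 : ℕ) : ZMod n) with hx₁def
  have hx₁ : x₁ + x₁ = s := by
    rw [hx₁def, ← Nat.cast_add, show s.val/2 + s.val/2 = s.val by omega, hvs]
  have hhalf : ((n/2 : ℕ) : ZMod n) ≠ 0 := by
    rw [Ne, ZMod.natCast_eq_zero_iff]
    intro hdvd
    have := Nat.le_of_dvd (by omega) hdvd
    omega
  set x₂ : ZMod n := x₁ + ((n/2 : ℕ) : ZMod n) with hx₂def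
  have hx₂ : x₂ + x₂ = s := by
    have h0 : x₂ + x₂ = (x₁ + x₁) + (((n/2 : ℕ) : ZMod n) + (((n/2:ℕ)) : ZMod n)) := by
      rw [hx₂def]; ring
    rw [h0, hx₁, ← Nat.cast_add, show n/2 + n/2 = n by omega, ZMod.natCast_self, add_zero]
  have hne : x₁ ≠ x₂ := by
    intro h
    apply hhalf
    have h1 : x₂ - x₁ = 0 := by rw [← h]; ring
    have h2 : x₂ - x₁ = ((n/2:ℕ):ZMod n) := by rw [hx₂def]; ring
    rw [h2] at h1
    exact h1
  calc 2 = ({x₁, x₂} : Finset (ZMod n)).card := (Finset.card_pair hne).symm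
    _ ≤ cnt n s := by
        apply Finset.card_le_card
        intro z hz
        rcases Finset.mem_insert.mp hz with h | h
        · subst h
          exact Finset.mem_filter.mpr ⟨Finset.mem_univ _, hx₁⟩
        · rw [Finset.mem_singleton] at h
          subst h
          exact Finset.mem_filter.mpr ⟨Finset.mem_univ _, hx₂⟩

lemma sumsum_ge (χ : ZMod n → Fin r) (c : Fin r) :
    (colorClass n r χ c).card ^ 2
      ≤ ∑ a ∈ colorClass n r χ c, ∑ b ∈ colorClass n r χ c, cnt n (a + b) := by
  classical
  set X := colorClass n r χ c with hX
  rcases Nat.mod_two_eq_zero_or_one n with heven | hodd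
  · -- n even
    set pe : ZMod n → Prop := fun a => a.val % 2 = 0 with hpe
    set e := (X.filter pe).card with he
    set o := (X.filter (fun a => ¬ pe a)).card with ho
    have heo : e + o = X.card := Finset.card_filter_add_card_filter_not _
    have hstep : ∀ a ∈ X, 2 * (if pe a then e else o) ≤ ∑ b ∈ X, cnt n (a + b) := by
      intro a _
      have hpar : ∀ b ∈ X, (pe b ↔ pe a) → 2 ≤ cnt n (a + b) := by
        intro b _ hiff
        apply cnt_ge_even n heven
        have hv : (a+b).val % 2 = (a.val + b.val) % 2 := by
          rw [ZMod.val_add]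
          exact Nat.mod_mod_of_dvd _ (by omega)
        rw [hv, hpe] at *
        simp only [hpe] at hiff
        omega
      have heq : 2 * (if pe a then e else o) = ∑ b ∈ X, (if pe b ↔ pe a then 2 else 0) := by
        rw [Finset.sum_ite, Finset.sum_const, Finset.sum_const, smul_eq_mul, smul_eq_mul,
          mul_zero, add_zero]
        by_cases hpa : pe a
        · have hfe : X.filter (fun b => pe b ↔ pe a) = X.filter pe :=
            Finset.filter_congr (fun b _ => by tauto)
          rw [hfe, ← he, if_pos hpa]
          ring
        · have hfo : X.filter (fun b => pe b ↔ pe a) = X.filter (fun b => ¬ pe b) :=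
            Finset.filter_congr (fun b _ => by tauto)
          rw [hfo, ← ho, if_neg hpa]
          ring
      rw [heq]
      apply Finset.sum_le_sum
      intro b hb
      by_cases hiff : pe b ↔ pe a
      · simp only [hiff, if_true]
        exact hpar b hb hiff
      · simp [hiff]
    have hcalc : ∑ a ∈ X, (2 * (if pe a then e else o)) = 2 * (e * e + o * o) := by
      rw [← Finset.sum_filter_add_sum_filter_not X pe]
      have h1 : ∑ a ∈ X.filter pe, (2 * (if pe a then e else o)) = e * (2 * e) := by
        calc ∑ a ∈ X.filter pe, (2 * (if pe a then e else o))
            = ∑ _a ∈ X.filter pe, 2 * e :=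
              Finset.sum_congr rfl (fun a ha => by rw [if_pos (Finset.mem_filter.mp ha).2])
          _ = e * (2 * e) := by rw [Finset.sum_const, smul_eq_mul, ← he]
      have h2 : ∑ a ∈ X.filter (fun a => ¬ pe a), (2 * (if pe a then e else o))
          = o * (2 * o) := by
        calc ∑ a ∈ X.filter (fun a => ¬ pe a), (2 * (if pe a then e else o))
            = ∑ _a ∈ X.filter (fun a => ¬ pe a), 2 * o :=
              Finset.sum_congr rfl (fun a ha => by rw [if_neg (Finset.mem_filter.mp ha).2])
          _ = o * (2 * o) := by rw [Finset.sum_const, smul_eq_mul, ← ho]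
      rw [h1, h2]
      ring
    have hmain : ∑ a ∈ X, (2 * (if pe a then e else o)) ≤ ∑ a ∈ X, ∑ b ∈ X, cnt n (a+b) :=
      Finset.sum_le_sum hstep
    have hsq : (e + o)^2 ≤ 2 * (e*e + o*o) := by
      have hz : ((e:ℤ) + o)^2 ≤ 2*((e:ℤ)*e + (o:ℤ)*o) := by
        nlinarith [sq_nonneg ((e:ℤ) - (o:ℤ))]
      exact_mod_cast hz
    calc X.card^2 = (e+o)^2 := by rw [heo]
      _ ≤ 2 * (e*e + o*o) := hsq
      _ = _ := hcalc.symm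
      _ ≤ _ := hmain
  · -- n odd
    calc X.card^2 = ∑ _a ∈ X, ∑ _b ∈ X, 1 := by
          simp [Finset.sum_const, smul_eq_mul, sq]
      _ ≤ ∑ a ∈ X, ∑ b ∈ X, cnt n (a+b) := by
          apply Finset.sum_le_sum
          intro a _
          apply Finset.sum_le_sum
          intro b _
          exact cnt_ge_odd n hodd _

lemma lower_exists (hr1 : 0 < r) (χ : ZMod n → Fin r) :
    ∃ (x : ZMod n) (c : Fin r), (n:ℝ)/(r:ℝ)^2 ≤ (Ycnt n r χ (x+x) c : ℝ) := by
  classical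
  have hn : n ≠ 0 := NeZero.ne n
  have hrR : (0:ℝ) < (r:ℝ) := by exact_mod_cast hr1
  have hpart : ∑ c : Fin r, (colorClass n r χ c).card = n := by
    have h0 := Finset.card_eq_sum_card_fiberwise
      (f := χ) (s := (Finset.univ : Finset (ZMod n))) (t := Finset.univ)
      (fun a _ => Finset.mem_univ _)
    rw [Finset.card_univ, ZMod.card] at h0
    exact h0.symm
  have hcs : ((n:ℝ))^2 ≤ (r:ℝ) * ∑ c : Fin r, ((colorClass n r χ c).card : ℝ)^2 := by
    have hC := sq_sum_le_card_mul_sum_sq (s := (Finset.univ : Finset (Fin r)))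
      (f := fun c => ((colorClass n r χ c).card : ℝ))
    rw [Finset.card_univ, Fintype.card_fin] at hC
    have hsum : ∑ c : Fin r, ((colorClass n r χ c).card : ℝ) = (n:ℝ) := by
      rw [← Nat.cast_sum]
      exact_mod_cast congrArg (Nat.cast : ℕ → ℝ) hpart
    rw [hsum] at hC
    exact hC
  have hYc : ∀ c : Fin r, ((colorClass n r χ c).card : ℝ)^2
      ≤ ∑ x : ZMod n, (Ycnt n r χ (x+x) c : ℝ) := by
    intro c
    have h1 := sumsum_ge n r χ c
    rw [← Ysum_eq n r χ c] at h1
    exact_mod_cast h1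
  have htot : ((n:ℝ))^2/(r:ℝ) ≤ ∑ p : ZMod n × Fin r, (Ycnt n r χ (p.1+p.1) p.2 : ℝ) := by
    rw [Fintype.sum_prod_type, Finset.sum_comm]
    have h3 : ∑ c : Fin r, ((colorClass n r χ c).card:ℝ)^2
        ≤ ∑ c : Fin r, ∑ x : ZMod n, (Ycnt n r χ (x+x) c : ℝ) :=
      Finset.sum_le_sum (fun c _ => hYc c)
    rw [div_le_iff₀ hrR]
    calc ((n:ℝ))^2 ≤ (r:ℝ) * ∑ c : Fin r, ((colorClass n r χ c).card : ℝ)^2 := hcs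
      _ ≤ (r:ℝ) * ∑ c : Fin r, ∑ x : ZMod n, (Ycnt n r χ (x+x) c : ℝ) := by
          apply mul_le_mul_of_nonneg_left h3 (le_of_lt hrR)
      _ = (∑ c : Fin r, ∑ x : ZMod n, (Ycnt n r χ (x+x) c : ℝ)) * (r:ℝ) := by ring
  haveI : Nonempty (Fin r) := ⟨⟨0, hr1⟩⟩
  have hne : (Finset.univ : Finset (ZMod n × Fin r)).Nonempty := Finset.univ_nonempty
  have havg := Finset.exists_le_of_sum_le hne
    (f := fun _ : ZMod n × Fin r => (n:ℝ)/(r:ℝ)^2)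
    (g := fun p : ZMod n × Fin r => (Ycnt n r χ (p.1+p.1) p.2 : ℝ)) ?_
  · obtain ⟨p, -, hp⟩ := havg
    exact ⟨p.1, p.2, hp⟩
  · rw [Finset.sum_const, nsmul_eq_mul, Finset.card_univ, Fintype.card_prod,
      ZMod.card, Fintype.card_fin]
    calc ((n*r : ℕ):ℝ) * ((n:ℝ)/(r:ℝ)^2) = (n:ℝ)^2/(r:ℝ) := by
          push_cast
          field_simp
      _ ≤ _ := htot

lemma MScyc_le_of_good (hr1 : 0 < r) (χ : ZMod n → Fin r) (B : ℕ)
    (hχ : ∀ (x : ZMod n) (c : Fin r), Ycnt n r χ (x + x) c ≤ B) : MScyc n r ≤ B := by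
  classical
  unfold MScyc
  apply csSup_le
  · refine ⟨0, fun χ' => ⟨∅, ⟨⟨0, hr1⟩, fun a ha => absurd ha (Set.notMem_empty a)⟩,
      ⟨0, by simp⟩, by simp⟩⟩
  · intro k hk
    obtain ⟨A, ⟨c, hc⟩, ⟨x, hx⟩, hkA⟩ := hk χ
    have hsub : A ⊆ ↑(pairSet n r χ (x + x) c) := by
      intro a ha
      have h1 : χ a = c := hc a ha
      have h2 : χ (x + x - a) = c := by
        rw [hx] at ha
        obtain ⟨w, hw, hwa⟩ := ha
        have hww : x + x - a = w := by
          rw [← hwa, two_smul]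
          ring
        rw [hww]
        exact hc w hw
      simp only [pairSet, Finset.coe_filter, Set.mem_setOf_eq]
      exact ⟨Finset.mem_univ a, h1, h2⟩
    have h3 : A.ncard ≤ Ycnt n r χ (x + x) c := by
      rw [Ycnt, ← Set.ncard_coe_finset]
      exact Set.ncard_le_ncard hsub (Finset.finite_toSet _)
    exact le_trans hkA (le_trans h3 (hχ x c))

lemma MScyc_ge_of_mem (hr1 : 0 < r) {k : ℕ}
    (hk : ∀ χ : ZMod n → Fin r, ∃ A : Set (ZMod n),
      (∃ c, ∀ a ∈ A, χ a = c) ∧ (∃ x : ZMod n, A = (fun a => 2 • x - a) '' A) ∧ k ≤ A.ncard) :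
    k ≤ MScyc n r := by
  classical
  unfold MScyc
  apply le_csSup
  · refine ⟨n, fun j hj => ?_⟩
    obtain ⟨A, -, -, hjA⟩ := hj (fun _ => ⟨0, hr1⟩)
    calc j ≤ A.ncard := hjA
      _ ≤ (Set.univ : Set (ZMod n)).ncard :=
          Set.ncard_le_ncard (Set.subset_univ A) Set.finite_univ
      _ = n := by rw [Set.ncard_univ, Nat.card_zmod]
  · exact hk

lemma pairSet_symmetric (χ : ZMod n → Fin r) (x : ZMod n) (c : Fin r) :
    (↑(pairSet n r χ (x+x) c) : Set (ZMod n))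
      = (fun a => 2 • x - a) '' ↑(pairSet n r χ (x+x) c) := by
  ext z
  simp only [Set.mem_image, Finset.mem_coe, pairSet, Finset.mem_filter, Finset.mem_univ,
    true_and]
  constructor
  · intro hz
    refine ⟨x + x - z, ⟨hz.2, by rw [sub_sub_self']; exact hz.1⟩, ?_⟩
    rw [two_smul]
    ring
  · rintro ⟨w, hw, rfl⟩
    have he1 : (2:ℕ) • x - w = x + x - w := by rw [two_smul]
    rw [he1]
    refine ⟨hw.2, ?_⟩
    rw [sub_sub_self']
    exact hw.1

lemma MScyc_ge (hr1 : 0 < r) : ((n:ℝ)/(r:ℝ)^2) ≤ (MScyc n r : ℝ) := by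
  classical
  set k₀ := Nat.ceil ((n:ℝ)/(r:ℝ)^2) with hk₀
  have hmem : k₀ ≤ MScyc n r := by
    apply MScyc_ge_of_mem n r hr1
    intro χ
    obtain ⟨x, c, hY⟩ := lower_exists n r hr1 χ
    refine ⟨↑(pairSet n r χ (x+x) c), ⟨c, ?_⟩, ⟨x, pairSet_symmetric n r χ x c⟩, ?_⟩
    · intro a ha
      simp only [Finset.mem_coe, pairSet, Finset.mem_filter] at ha
      exact ha.2.1
    · rw [Set.ncard_coe_finset]
      exact Nat.ceil_le.mpr hY
  calc (n:ℝ)/(r:ℝ)^2 ≤ (k₀ : ℝ) := Nat.le_ceil _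
    _ ≤ _ := by exact_mod_cast hmem

end core

lemma log_lower (x : ℝ) (hx : 1 < x) : 1 - x⁻¹ ≤ Real.log x := by
  have h1 : Real.log x⁻¹ ≤ x⁻¹ - 1 := Real.log_le_sub_one_of_pos (by positivity)
  rw [Real.log_inv] at h1
  linarith

lemma numeric_main (r : ℕ) (hr : 2 ≤ r) (ε : ℝ) (hε : 0 < ε) (hε1 : ε ≤ 1) :
    ∀ᶠ n : ℕ in atTop, ∀ K : ℕ, ((1/(r:ℝ)^2 + ε) * n ≤ K) →
      ((n:ℝ) * r)^2 * (((r:ℝ)^2 - 1 + (1+ε)) / (r:ℝ)^2)^n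
        < (1+ε) ^ (2 * ((K - 1) / 2)) := by
  have hrR : (2:ℝ) ≤ (r:ℝ) := by exact_mod_cast hr
  have hrpos : (0:ℝ) < (r:ℝ) := by linarith
  set x : ℝ := 1 + ε with hxdef
  have hx1 : 1 < x := by simp [hxdef]; linarith
  have hx0 : (0:ℝ) < x := by linarith
  set γ : ℝ := 1/(r:ℝ)^2 + ε with hγdef
  have hγpos : 0 < γ := by positivity
  set B₀ : ℝ := ((r:ℝ)^2 - 1 + x) / (r:ℝ)^2 with hB₀def
  have hB₀eq : B₀ = 1 + ε / (r:ℝ)^2 := by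
    rw [hB₀def, hxdef]
    field_simp
    ring
  have hB₀pos : 0 < B₀ := by rw [hB₀eq]; positivity
  set w : ℝ := B₀ / x ^ γ with hwdef
  have hxγpos : 0 < x ^ γ := Real.rpow_pos_of_pos hx0 γ
  have hwpos : 0 < w := div_pos hB₀pos hxγpos
  have hwlt : w < 1 := by
    rw [hwdef, div_lt_one hxγpos]
    have hlogB : Real.log B₀ ≤ ε / (r:ℝ)^2 := by
      have := Real.log_le_sub_one_of_pos hB₀pos
      rw [hB₀eq] at this ⊢
      linarith
    have hlogx : ε / (1+ε) ≤ Real.log x := by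
      have := log_lower x hx1
      have hinv : 1 - x⁻¹ = ε / (1+ε) := by
        rw [hxdef]
        field_simp
        ring
      linarith
    have hstrict : ε / (r:ℝ)^2 < γ * Real.log x := by
      have h1 : γ * (ε / (1+ε)) ≤ γ * Real.log x :=
        mul_le_mul_of_nonneg_left hlogx (le_of_lt hγpos)
      have h2 : ε / (r:ℝ)^2 < γ * (ε / (1+ε)) := by
        have hr2 : (4:ℝ) ≤ (r:ℝ)^2 := by nlinarith
        have heq : γ * (ε / (1+ε)) = (γ * ε) / (1+ε) := by ring
        rw [heq, lt_div_iff₀ (show (0:ℝ) < 1+ε by linarith), hγdef]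
        have e1 : ε / (r:ℝ)^2 * (1+ε) = ε/(r:ℝ)^2 + ε^2/(r:ℝ)^2 := by ring
        have e2 : (1/(r:ℝ)^2 + ε) * ε = ε/(r:ℝ)^2 + ε^2 := by ring
        rw [e1, e2]
        have h3 : ε^2/(r:ℝ)^2 < ε^2 := by
          rw [div_lt_iff₀ (by positivity)]
          nlinarith
        linarith
      linarith
    have : Real.log B₀ < Real.log (x ^ γ) := by
      rw [Real.log_rpow hx0]
      calc Real.log B₀ ≤ ε / (r:ℝ)^2 := hlogB
        _ < γ * Real.log x := hstrict
    calc B₀ = Real.exp (Real.log B₀) := (Real.exp_log hB₀pos).symm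
      _ < Real.exp (Real.log (x ^ γ)) := Real.exp_lt_exp.mpr this
      _ = x ^ γ := Real.exp_log hxγpos
  -- eventual smallness
  have hsum : Summable (fun n : ℕ => (n:ℝ)^2 * w^n) := by
    apply summable_pow_mul_geometric_of_norm_lt_one
    rw [Real.norm_eq_abs, abs_of_pos hwpos]
    exact hwlt
  have htend : Tendsto (fun n : ℕ => (n:ℝ)^2 * w^n) atTop (nhds 0) :=
    hsum.tendsto_atTop_zero
  have htend2 : Tendsto (fun n : ℕ => ((r:ℝ)^2 * x^2) * ((n:ℝ)^2 * w^n)) atTop (nhds 0) := by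
    have := htend.const_mul ((r:ℝ)^2 * x^2)
    simpa using this
  have hev2 : ∀ᶠ n : ℕ in atTop, ((r:ℝ)^2 * x^2) * ((n:ℝ)^2 * w^n) < 1 := by
    have := htend2.eventually_lt_const (show (0:ℝ) < 1 by norm_num)
    exact this
  have hev1 : ∀ᶠ n : ℕ in atTop, (2:ℝ) ≤ ε * n := by
    rw [eventually_atTop]
    refine ⟨⌈(2:ℝ)/ε⌉₊, fun n hn => ?_⟩
    have h1 : (2:ℝ)/ε ≤ (⌈(2:ℝ)/ε⌉₊ : ℝ) := Nat.le_ceil _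
    have h2 : ((⌈(2:ℝ)/ε⌉₊ : ℕ) : ℝ) ≤ (n:ℝ) := by exact_mod_cast hn
    rw [div_le_iff₀ hε] at h1
    nlinarith
  filter_upwards [hev1, hev2] with n h1 h2
  intro K hK
  -- basic facts
  have hKγ : γ * n ≤ (K:ℝ) := hK
  have hγn2 : (2:ℝ) ≤ γ * n := by
    have hεγ : ε ≤ γ := by
      have h0 : (0:ℝ) < 1/(r:ℝ)^2 := by positivity
      rw [hγdef]; linarith
    have : ε * n ≤ γ * n := mul_le_mul_of_nonneg_right hεγ (Nat.cast_nonneg n)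
    linarith
  have hK2 : 2 ≤ K := by
    by_contra hcon
    push_neg at hcon
    interval_cases K <;> simp_all <;> linarith
  -- exponent chain
  have hexp1 : (1:ℝ) * x ^ ((K - 2 : ℕ)) ≤ x ^ (2 * ((K - 1) / 2)) := by
    rw [one_mul]
    exact pow_le_pow_right₀ (le_of_lt hx1) (by omega)
  have hexp2 : x ^ ((γ * n - 2 : ℝ)) ≤ (x ^ ((K - 2 : ℕ)) : ℝ) := by
    have : ((K - 2 : ℕ) : ℝ) = (K:ℝ) - 2 := by
      push_cast [Nat.cast_sub hK2]
      ring
    rw [← Real.rpow_natCast x (K - 2), this]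
    apply Real.rpow_le_rpow_of_exponent_le (le_of_lt hx1)
    linarith
  -- core inequality
  have hcore : ((n:ℝ) * r)^2 * B₀^n < x ^ ((γ * n - 2 : ℝ)) := by
    have hB0n : B₀ ^ n = w^n * x ^ ((γ * n : ℝ)) := by
      have hBw : B₀ = w * x ^ γ := by
        rw [hwdef, div_mul_cancel₀]
        exact ne_of_gt hxγpos
      rw [hBw, mul_pow, ← Real.rpow_natCast (x ^ γ) n, ← Real.rpow_mul (le_of_lt hx0)]
    have hxsub : x ^ ((γ * n - 2 : ℝ)) = x ^ ((γ * n : ℝ)) * (x ^ ((-2 : ℝ))) := by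
      rw [← Real.rpow_add hx0]
      rw [show (γ * (n:ℝ) + (-2) : ℝ) = γ * n - 2 by ring]
    rw [hB0n, hxsub]
    have hrearr : ((n:ℝ) * r)^2 * (w^n * x ^ ((γ * n : ℝ)))
        = (((n:ℝ) * r)^2 * w^n) * x ^ ((γ * n : ℝ)) := by ring
    rw [hrearr, mul_comm (x ^ ((γ * n : ℝ))) (x ^ ((-2:ℝ)))]
    apply mul_lt_mul_of_pos_right _ (Real.rpow_pos_of_pos hx0 _)
    -- ((n r)^2 w^n < x^{-2}
    have hxneg2 : x ^ ((-2:ℝ)) = (x^2)⁻¹ := by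
      rw [Real.rpow_neg (le_of_lt hx0)]
      norm_num
    have h3 : ((n:ℝ)*r)^2 * w^n * (x^2) < 1 := by
      have e : ((n:ℝ)*r)^2 * w^n * (x^2) = (r:ℝ)^2*x^2*((n:ℝ)^2*w^n) := by ring
      rw [e]; exact h2
    rw [hxneg2, inv_eq_one_div, lt_div_iff₀ (by positivity)]
    exact h3
  calc ((n:ℝ) * r)^2 * B₀^n < x ^ ((γ * n - 2 : ℝ)) := hcore
    _ ≤ x ^ ((K - 2 : ℕ)) := hexp2
    _ ≤ x ^ (2 * ((K - 1) / 2)) := le_trans (by linarith [hexp1]) (le_refl _)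

end MS11

/-- lim_{n→∞} ms(ℤ_n, r) = 1/r². -/
theorem stmt_11 (r : ℕ) (hr : 0 < r) :
    Tendsto (fun n : ℕ => (MScyc n r : ℝ) / n) atTop (nhds (1 / (r : ℝ) ^ 2)) := by
  rcases Nat.lt_or_ge r 2 with hr2 | hr2
  · -- r = 1
    have hr1 : r = 1 := by omega
    subst hr1
    have hev : ∀ᶠ n : ℕ in atTop, (1:ℝ) = (MScyc n 1 : ℝ) / n := by
      rw [eventually_atTop]
      refine ⟨1, fun n hn => ?_⟩
      haveI : NeZero n := ⟨by omega⟩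
      have hle : MScyc n 1 ≤ n := by
        apply MS11.MScyc_le_of_good n 1 one_pos (fun _ => ⟨0, one_pos⟩) n
        intro x c
        calc MS11.Ycnt n 1 (fun _ => ⟨0, one_pos⟩) (x+x) c
            ≤ (Finset.univ : Finset (ZMod n)).card := Finset.card_filter_le _ _
          _ = n := by rw [Finset.card_univ, ZMod.card]
      have hge : n ≤ MScyc n 1 := by
        apply MS11.MScyc_ge_of_mem n 1 one_pos
        intro χ
        refine ⟨Set.univ, ⟨χ 0, fun a _ => Subsingleton.elim _ _⟩, ⟨0, ?_⟩, ?_⟩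
        · ext z
          simp only [Set.image_univ, Set.mem_univ, Set.mem_range, true_iff]
          exact ⟨2 • (0:ZMod n) - z, by simp⟩
        · rw [Set.ncard_univ, Nat.card_zmod]
      have heq : MScyc n 1 = n := le_antisymm hle hge
      have hnne : (n:ℝ) ≠ 0 := by
        have : 0 < n := by omega
        exact_mod_cast Nat.pos_iff_ne_zero.mp this
      rw [heq, div_self hnne]
    have h1 : Tendsto (fun _ : ℕ => (1:ℝ)) atTop (nhds 1) := tendsto_const_nhds
    have h2 := h1.congr' hev
    convert h2 using 2
    norm_num
  · -- r ≥ 2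
    rw [Metric.tendsto_atTop]
    intro ε hε
    set ε' := min (ε/2) 1 with hε'def
    have hε'pos : 0 < ε' := lt_min (by linarith) one_pos
    have hε'le1 : ε' ≤ 1 := min_le_right _ _
    have hε'ltε : ε' < ε := lt_of_le_of_lt (min_le_left _ _) (by linarith)
    obtain ⟨N₂, hN₂⟩ := Filter.eventually_atTop.mp (MS11.numeric_main r hr2 ε' hε'pos hε'le1)
    refine ⟨max N₂ 1, fun n hn => ?_⟩
    have hn1 : 1 ≤ n := le_trans (le_max_right _ _) hn
    haveI : NeZero n := ⟨by omega⟩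
    have hrR : (0:ℝ) < (r:ℝ) := by exact_mod_cast hr
    have hnR : (0:ℝ) < (n:ℝ) := by exact_mod_cast hn1
    set K := ⌈(1/(r:ℝ)^2 + ε') * n⌉₊ with hKdef
    have hnum := hN₂ n (le_trans (le_max_left _ _) hn) K (Nat.le_ceil _)
    obtain ⟨χ, hχ⟩ := MS11.good_exists n r hr (by omega) (1+ε') (by linarith) K hnum
    have hup : MScyc n r ≤ K - 1 :=
      MS11.MScyc_le_of_good n r hr χ (K-1) (fun x c => by
        have := hχ (x+x) c; omega)
    have hlow := MS11.MScyc_ge n r hr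
    have hargpos : (0:ℝ) < (1/(r:ℝ)^2 + ε') * n := by positivity
    have hK1 : 1 ≤ K := Nat.ceil_pos.mpr hargpos
    have hKn : (K:ℝ) < (1/(r:ℝ)^2 + ε') * n + 1 := Nat.ceil_lt_add_one (le_of_lt hargpos)
    have hup' : (MScyc n r : ℝ) ≤ (1/(r:ℝ)^2 + ε') * n := by
      have h1 : (MScyc n r : ℝ) ≤ ((K - 1 : ℕ) : ℝ) := by exact_mod_cast hup
      rw [Nat.cast_sub hK1] at h1
      push_cast at h1
      linarith
    have hlow' : 1/(r:ℝ)^2 ≤ (MScyc n r : ℝ)/n := by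
      rw [le_div_iff₀ hnR]
      calc 1/(r:ℝ)^2 * n = (n:ℝ)/(r:ℝ)^2 := by ring
        _ ≤ _ := hlow
    have hup'' : (MScyc n r : ℝ)/n ≤ 1/(r:ℝ)^2 + ε' := by
      rw [div_le_iff₀ hnR]
      exact hup'
    rw [Real.dist_eq, abs_lt]
    constructor
    · linarith
    · linarith
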